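/- arXiv:1506.06613 — 2 statements merged into one kernel-verified Lean document; each statement's English description precedes it below -/
import Mathlib

section
/- Consider the n-dimensional system (n ≥ 2) ẋ₁ = g(x_n) − α₁x₁, ẋ_i = x_{i−1} − α_i x_i for i = 2, …, n, where α_i > 0, g(u) = (1+u)/(k+u) with k > 1, and let α := α₁·α₂·⋯·α_n. Its Jacobian at x ∈ ℝ₊ⁿ is the matrix J(x) with J(x)_{ii} = −α_i, J(x)_{i+1,i} = 1 for i = 1, …, n−1, J(x)_{1,n} = g'(x_n) = (k−1)/(k+x_n)², and all other entries zero. If k − 1 < α·k², then there exists ε ∈ (0, min_i α_i) such that μ₁(D_ε J(x) D_ε⁻¹) ≤ −ε/2 for all x ∈ ℝ₊ⁿ, where D_ε := diag(1, α₁−ε, (α₁−ε)(α₂−ε), …, Π_{i=1}^{n−1}(α_i−ε)); consequently the system is contractive on ℝ₊ⁿ with respect to the scaled norm |z|_{1,D_ε} := ‖D_ε z‖₁. -/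
open Filter Topology

/-- `cCol A j = A_{jj} + Σ_{i ≠ j} |A_{ij}|`: the `j`-th column sum of `A` with the
off-diagonal entries replaced by their absolute values. -/
def cCol {n : ℕ} (A : Matrix (Fin n) (Fin n) ℝ) (j : Fin n) : ℝ :=
  A j j + ∑ i ∈ Finset.univ.erase j, |A i j|

/-- The matrix measure induced by the `L¹` norm: `μ₁(A) = max_j c_j(A)`. -/
noncomputable def mu1 {n : ℕ} (A : Matrix (Fin n) (Fin n) ℝ) : ℝ :=
  ⨆ j, cCol A j

/-- The vector field of the biochemical feedback circuit:
`ẋ₁ = g(x_n) − α₁x₁`, `ẋ_i = x_{i−1} − α_i x_i` for `i = 2,…,n`,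
where `g(u) = (1+u)/(k+u)`. -/
noncomputable def bioF (n : ℕ) (α : Fin n → ℝ) (k : ℝ) (x : Fin n → ℝ) : Fin n → ℝ :=
  fun i =>
    if (i : ℕ) = 0 then
      (1 + x ⟨n - 1, Nat.sub_lt i.pos Nat.one_pos⟩) /
        (k + x ⟨n - 1, Nat.sub_lt i.pos Nat.one_pos⟩) - α i * x i
    else
      x ⟨(i : ℕ) - 1, lt_of_le_of_lt (Nat.sub_le _ _) i.isLt⟩ - α i * x i

/-- The Jacobian of `bioF` at `x ∈ ℝ₊ⁿ`: `J_{ii} = −α_i`, `J_{i+1,i} = 1`,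
`J_{1,n} = g'(x_n) = (k−1)/(k+x_n)²`, all other entries zero. -/
noncomputable def bioJac (n : ℕ) (α : Fin n → ℝ) (k : ℝ) (x : Fin n → ℝ) :
    Matrix (Fin n) (Fin n) ℝ :=
  fun i j =>
    if i = j then -α i
    else if (i : ℕ) = (j : ℕ) + 1 then 1
    else if (i : ℕ) = 0 ∧ (j : ℕ) = n - 1 then (k - 1) / (k + x j) ^ 2
    else 0

/-- The diagonal entries of the scaling matrix `D_ε`:
`d_i = Π_{m < i} (α_m − ε)` (so `d₀ = 1`). -/
noncomputable def dEps {n : ℕ} (α : Fin n → ℝ) (ε : ℝ) : Fin n → ℝ :=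
  fun i => ∏ m ∈ Finset.univ.filter (fun m : Fin n => (m : ℕ) < (i : ℕ)), (α m - ε)

namespace BioAux

variable {n : ℕ}

lemma d_zero (α : Fin n → ℝ) (ε : ℝ) (i : Fin n) (hi : (i : ℕ) = 0) : dEps α ε i = 1 := by
  unfold dEps; rw [hi]; simp

lemma d_succ (α : Fin n → ℝ) (ε : ℝ) (j : Fin n) (h : (j : ℕ) + 1 < n) :
    dEps α ε ⟨(j : ℕ) + 1, h⟩ = dEps α ε j * (α j - ε) := by
  unfold dEps
  have hins : (Finset.univ.filter (fun m : Fin n => (m : ℕ) < (j : ℕ) + 1)) =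
      insert j (Finset.univ.filter (fun m : Fin n => (m : ℕ) < (j : ℕ))) := by
    ext m
    simp only [Finset.mem_filter, Finset.mem_univ, true_and, Finset.mem_insert, Fin.ext_iff]
    omega
  rw [hins, Finset.prod_insert (by simp)]
  ring

lemma d_pos (α : Fin n → ℝ) (ε : ℝ) (hεα : ∀ i, ε < α i) (i : Fin n) : 0 < dEps α ε i :=
  Finset.prod_pos fun m _ => sub_pos.2 (hεα m)

lemma gLip (k : ℝ) (hk : 1 < k) (a b : ℝ) (ha : 0 ≤ a) (hb : 0 ≤ b) :
    |(1 + a) / (k + a) - (1 + b) / (k + b)| ≤ (k - 1) / k ^ 2 * |a - b| := by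
  have hka : 0 < k + a := by linarith
  have hkb : 0 < k + b := by linarith
  have heq : (1 + a) / (k + a) - (1 + b) / (k + b) = (k - 1) * (a - b) / ((k + a) * (k + b)) := by
    field_simp
    ring
  rw [heq, abs_div, abs_mul, abs_of_pos (mul_pos hka hkb),
    abs_of_pos (by linarith : (0:ℝ) < k - 1), div_le_iff₀ (mul_pos hka hkb)]
  have h2 : k ^ 2 ≤ (k + a) * (k + b) := by nlinarith
  have h3 : (k - 1) / k ^ 2 * |a - b| * k ^ 2 ≤ (k - 1) / k ^ 2 * |a - b| * ((k + a) * (k + b)) :=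
    mul_le_mul_of_nonneg_left h2 (mul_nonneg (div_nonneg (by linarith) (by positivity)) (abs_nonneg _))
  have h4 : (k - 1) / k ^ 2 * |a - b| * k ^ 2 = (k - 1) * |a - b| := by
    field_simp
  linarith

lemma core (hn : 2 ≤ n) (α : Fin n → ℝ) (ε L : ℝ) (hε : 0 < ε) (hεα : ∀ i, ε < α i)
    (hL : 0 ≤ L)
    (hkey : L ≤ (α ⟨n - 1, by omega⟩ - ε / 2) * dEps α ε ⟨n - 1, by omega⟩)
    (w y : Fin n → ℝ)
    (hy0 : |y ⟨0, by omega⟩ + α ⟨0, by omega⟩ * w ⟨0, by omega⟩| ≤ L * |w ⟨n - 1, by omega⟩|)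
    (hyi : ∀ i : Fin n, 0 < (i : ℕ) →
      y i = w ⟨(i : ℕ) - 1, lt_of_le_of_lt (Nat.sub_le _ _) i.isLt⟩ - α i * w i)
    (h : ℝ) (hh : 0 < h) (hhα : ∀ i, h * α i ≤ 1) :
    ∑ i, dEps α ε i * |w i + h * y i| ≤ (1 - h * (ε / 2)) * ∑ i, dEps α ε i * |w i| := by
  set d : Fin n → ℝ := dEps α ε with hd
  set lst : Fin n := ⟨n - 1, by omega⟩ with hlst
  set z0 : Fin n := ⟨0, by omega⟩ with hz0
  set c : Fin n → ℝ := fun i => if (i : ℕ) = 0 then L * |w lst|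
    else d i * |w ⟨(i : ℕ) - 1, lt_of_le_of_lt (Nat.sub_le _ _) i.isLt⟩| with hc
  have hdpos : ∀ i, 0 < d i := d_pos α ε hεα
  have step1 : ∀ i : Fin n, d i * |w i + h * y i| ≤ d i * ((1 - h * α i) * |w i|) + h * c i := by
    intro i
    have h1α : 0 ≤ 1 - h * α i := by linarith [hhα i]
    by_cases hi : (i : ℕ) = 0
    · have hiz : i = z0 := Fin.ext hi
      subst hiz
      have key : w z0 + h * y z0 = (1 - h * α z0) * w z0 + h * (y z0 + α z0 * w z0) := by ring
      have habs : |w z0 + h * y z0| ≤ (1 - h * α z0) * |w z0| + h * (L * |w lst|) := by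
        rw [key]
        calc |(1 - h * α z0) * w z0 + h * (y z0 + α z0 * w z0)|
            ≤ |(1 - h * α z0) * w z0| + |h * (y z0 + α z0 * w z0)| := abs_add_le _ _
          _ = (1 - h * α z0) * |w z0| + h * |y z0 + α z0 * w z0| := by
              rw [abs_mul, abs_mul, abs_of_nonneg h1α, abs_of_pos hh]
          _ ≤ (1 - h * α z0) * |w z0| + h * (L * |w lst|) := by nlinarith [hh.le]
      have hdz : d z0 = 1 := d_zero α ε z0 rfl
      have hcz : c z0 = L * |w lst| := by simp [hc, hz0]
      rw [hcz, hdz]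
      nlinarith [habs]
    · have hipos : 0 < (i : ℕ) := Nat.pos_of_ne_zero hi
      set ip : Fin n := ⟨(i : ℕ) - 1, lt_of_le_of_lt (Nat.sub_le _ _) i.isLt⟩ with hip
      have hyv := hyi i hipos
      have key : w i + h * y i = (1 - h * α i) * w i + h * w ip := by rw [hyv]; ring
      have habs : |w i + h * y i| ≤ (1 - h * α i) * |w i| + h * |w ip| := by
        rw [key]
        calc |(1 - h * α i) * w i + h * w ip| ≤ |(1 - h * α i) * w i| + |h * w ip| := abs_add_le _ _
          _ = (1 - h * α i) * |w i| + h * |w ip| := by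
              rw [abs_mul, abs_mul, abs_of_nonneg h1α, abs_of_pos hh]
      have hci : c i = d i * |w ip| := by simp [hc, hi, hip]
      rw [hci]
      nlinarith [habs, (hdpos i).le]
  set e : Fin n → ℝ := fun j => if (j : ℕ) = n - 1 then ε / 2 else ε with he
  have step2 : ∑ i, c i ≤ ∑ j, d j * |w j| * (α j - e j) := by
    have hz0mem : z0 ∈ (Finset.univ : Finset (Fin n)) := Finset.mem_univ _
    rw [← Finset.add_sum_erase _ c hz0mem]
    have hlstmem : lst ∈ (Finset.univ : Finset (Fin n)) := Finset.mem_univ _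
    rw [← Finset.add_sum_erase _ (fun j => d j * |w j| * (α j - e j)) hlstmem]
    have hcz : c z0 = L * |w lst| := by simp [hc, hz0]
    have helst : e lst = ε / 2 := by simp [he, hlst]
    have hre : ∑ i ∈ Finset.univ.erase z0, c i
        = ∑ j ∈ Finset.univ.erase lst, d j * |w j| * (α j - ε) := by
      apply Finset.sum_nbij' (i := fun i : Fin n => (⟨(i : ℕ) - 1,
          lt_of_le_of_lt (Nat.sub_le _ _) i.isLt⟩ : Fin n))
        (j := fun j : Fin n => (⟨((j : ℕ) + 1) % n, Nat.mod_lt _ (by omega)⟩ : Fin n))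
      · intro a ha
        have ha0 : (a : ℕ) ≠ 0 := by
          simpa [Fin.ext_iff, hz0] using Finset.ne_of_mem_erase ha
        refine Finset.mem_erase.2 ⟨?_, Finset.mem_univ _⟩
        simp only [hlst, ne_eq, Fin.mk.injEq]
        have := a.isLt
        omega
      · intro b hb
        have : (b : ℕ) ≠ n - 1 := by
          simpa [Fin.ext_iff, hlst] using Finset.ne_of_mem_erase hb
        have hbl : (b : ℕ) + 1 < n := by have := b.isLt; omega
        refine Finset.mem_erase.2 ⟨?_, Finset.mem_univ _⟩
        simp only [hz0, ne_eq, Fin.mk.injEq]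
        rw [Nat.mod_eq_of_lt hbl]
        omega
      · intro a ha
        have ha0 : (a : ℕ) ≠ 0 := by
          simpa [Fin.ext_iff, hz0] using Finset.ne_of_mem_erase ha
        have hlt : (a : ℕ) - 1 + 1 < n := by have := a.isLt; omega
        apply Fin.ext
        show ((a : ℕ) - 1 + 1) % n = (a : ℕ)
        rw [Nat.mod_eq_of_lt hlt]
        omega
      · intro b hb
        have : (b : ℕ) ≠ n - 1 := by
          simpa [Fin.ext_iff, hlst] using Finset.ne_of_mem_erase hb
        have hbl : (b : ℕ) + 1 < n := by have := b.isLt; omega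
        apply Fin.ext
        show ((b : ℕ) + 1) % n - 1 = (b : ℕ)
        rw [Nat.mod_eq_of_lt hbl]
        omega
      · intro a ha
        have ha0 : (a : ℕ) ≠ 0 := by
          simpa [Fin.ext_iff, hz0] using Finset.ne_of_mem_erase ha
        have hci : c a = d a * |w ⟨(a : ℕ) - 1, lt_of_le_of_lt (Nat.sub_le _ _) a.isLt⟩| := by
          simp [hc, ha0]
        rw [hci]
        have hlt : ((a : ℕ) - 1) + 1 < n := by have := a.isLt; omega
        have hsucc := d_succ α ε ⟨(a : ℕ) - 1, lt_of_le_of_lt (Nat.sub_le _ _) a.isLt⟩ hlt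
        have haeq : (⟨((a : ℕ) - 1) + 1, hlt⟩ : Fin n) = a := by
          simp only [Fin.ext_iff]; omega
        rw [haeq] at hsucc
        rw [← hd] at hsucc
        rw [hsucc]
        ring
    rw [hcz, hre]
    have hsum_eq : ∑ j ∈ Finset.univ.erase lst, d j * |w j| * (α j - ε)
        = ∑ j ∈ Finset.univ.erase lst, d j * |w j| * (α j - e j) := by
      apply Finset.sum_congr rfl
      intro j hj
      have : (j : ℕ) ≠ n - 1 := by
        simpa [Fin.ext_iff, hlst] using Finset.ne_of_mem_erase hj
      simp [he, this]
    rw [hsum_eq, helst]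
    have : L * |w lst| ≤ d lst * |w lst| * (α lst - ε / 2) := by
      nlinarith [abs_nonneg (w lst), hkey]
    linarith
  calc ∑ i, d i * |w i + h * y i|
      ≤ ∑ i, (d i * ((1 - h * α i) * |w i|) + h * c i) :=
        Finset.sum_le_sum fun i _ => step1 i
    _ = ∑ i, d i * ((1 - h * α i) * |w i|) + h * ∑ i, c i := by
        rw [Finset.sum_add_distrib, Finset.mul_sum]
    _ ≤ ∑ i, d i * ((1 - h * α i) * |w i|) + h * ∑ j, d j * |w j| * (α j - e j) := by
        nlinarith [step2, hh.le]
    _ = ∑ j, d j * |w j| * (1 - h * e j) := by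
        rw [Finset.mul_sum, ← Finset.sum_add_distrib]
        apply Finset.sum_congr rfl
        intro j _
        ring
    _ ≤ ∑ j, d j * |w j| * (1 - h * (ε / 2)) := by
        apply Finset.sum_le_sum
        intro j _
        have heb : ε / 2 ≤ e j := by
          by_cases hj : (j : ℕ) = n - 1 <;> simp [he, hj] <;> linarith
        have hnn : 0 ≤ d j * |w j| := mul_nonneg (hdpos j).le (abs_nonneg _)
        have h1 : h * (ε / 2) ≤ h * e j := mul_le_mul_of_nonneg_left heb hh.le
        nlinarith [mul_nonneg hnn (by linarith : (0:ℝ) ≤ h * e j - h * (ε / 2))]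
    _ = (1 - h * (ε / 2)) * ∑ i, d i * |w i| := by
        rw [Finset.mul_sum]
        apply Finset.sum_congr rfl
        intro j _
        ring

end BioAux

/-- If `k − 1 < α·k²` (with `α = Π α_i`), then there is
`ε ∈ (0, min_i α_i)` with `μ₁(D_ε J(x) D_ε⁻¹) ≤ −ε/2` for all `x ∈ ℝ₊ⁿ`; consequently
the system is contractive on `ℝ₊ⁿ` w.r.t. the scaled norm `|z|_{1,D_ε} = ‖D_ε z‖₁`. -/
theorem bio_circuit_contractive {n : ℕ} (hn : 2 ≤ n)
    (α : Fin n → ℝ) (hα : ∀ i, 0 < α i)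
    (k : ℝ) (hk : 1 < k)
    (hcond : k - 1 < (∏ i, α i) * k ^ 2) :
    ∃ ε : ℝ, 0 < ε ∧ (∀ i, ε < α i) ∧
      (∀ x : Fin n → ℝ, (∀ i, 0 ≤ x i) →
        mu1 (Matrix.diagonal (dEps α ε) * bioJac n α k x *
          (Matrix.diagonal (dEps α ε))⁻¹) ≤ -ε / 2) ∧
      (∃ c > (0:ℝ), ∀ t₁ t₂ : ℝ, 0 ≤ t₁ → t₁ ≤ t₂ → ∀ u v : ℝ → (Fin n → ℝ),
        (∀ t ≥ t₁, (∀ i, 0 ≤ u t i) ∧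
          HasDerivWithinAt u (bioF n α k (u t)) (Set.Ici t₁) t) →
        (∀ t ≥ t₁, (∀ i, 0 ≤ v t i) ∧
          HasDerivWithinAt v (bioF n α k (v t)) (Set.Ici t₁) t) →
        ∑ i, |dEps α ε i * (u t₂ i - v t₂ i)| ≤
          Real.exp (-c * (t₂ - t₁)) * ∑ i, |dEps α ε i * (u t₁ i - v t₁ i)|) := by
  have h0n : 0 < n := by omega
  have hlt : n - 1 < n := by omega
  set lst : Fin n := ⟨n - 1, hlt⟩ with hlst
  have hk0 : (0:ℝ) < k := lt_trans one_pos hk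
  -- choice of ε
  have hΨcont : Continuous fun e : ℝ => (α lst - e / 2) * dEps α e lst := by
    apply Continuous.mul
    · exact continuous_const.sub (continuous_id.div_const 2)
    · exact continuous_finset_prod _ fun m _ => continuous_const.sub continuous_id
  have hΨ0 : (α lst - 0 / 2) * dEps α 0 lst = ∏ i, α i := by
    have hfilter : Finset.univ.filter (fun m : Fin n => (m : ℕ) < n - 1)
        = Finset.univ.erase lst := by
      ext m
      simp only [Finset.mem_filter, Finset.mem_univ, true_and, Finset.mem_erase, and_true,
        ne_eq, hlst, Fin.ext_iff]
      have := m.isLt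
      omega
    show (α lst - 0 / 2) * ∏ m ∈ Finset.univ.filter (fun m : Fin n => (m : ℕ) < n - 1),
      (α m - 0) = ∏ i, α i
    rw [hfilter]
    simp only [sub_zero, zero_div]
    exact Finset.mul_prod_erase Finset.univ α (Finset.mem_univ lst)
  have hP : (k - 1) / k ^ 2 < ∏ i, α i := by
    rw [div_lt_iff₀ (by positivity)]
    exact hcond
  have h1 : ∀ᶠ e in 𝓝 (0:ℝ), (k - 1) / k ^ 2 < (α lst - e / 2) * dEps α e lst := by
    have h0' : (k - 1) / k ^ 2 < (α lst - 0 / 2) * dEps α 0 lst := by rw [hΨ0]; exact hP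
    exact (hΨcont.tendsto 0).eventually_const_lt h0'
  have h2 : ∀ᶠ e in 𝓝 (0:ℝ), ∀ i, e < α i :=
    eventually_all.2 fun i => eventually_lt_nhds (hα i)
  obtain ⟨ε, hεmem, hεΨ, hεα⟩ :
      ∃ e : ℝ, e ∈ Set.Ioi (0:ℝ) ∧
        ((k - 1) / k ^ 2 < (α lst - e / 2) * dEps α e lst) ∧ ∀ i, e < α i := by
    have h3 : ∀ᶠ e in 𝓝[>] (0:ℝ),
        ((k - 1) / k ^ 2 < (α lst - e / 2) * dEps α e lst) ∧ ∀ i, e < α i :=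
      (h1.and h2).filter_mono nhdsWithin_le_nhds
    obtain ⟨e, he1, he2⟩ := (h3.and self_mem_nhdsWithin).exists
    exact ⟨e, he2, he1.1, he1.2⟩
  have hεpos : 0 < ε := hεmem
  have hdpos : ∀ i, 0 < dEps α ε i := BioAux.d_pos α ε hεα
  set d : Fin n → ℝ := dEps α ε with hd
  refine ⟨ε, hεpos, hεα, ?_, ?_⟩
  · -- matrix measure bound
    intro x hx
    have hdinv : (Matrix.diagonal d)⁻¹ = Matrix.diagonal (fun i => (d i)⁻¹) := by
      apply Matrix.inv_eq_right_inv
      rw [Matrix.diagonal_mul_diagonal]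
      have : (fun i => d i * (d i)⁻¹) = fun _ => (1:ℝ) := by
        funext i
        exact mul_inv_cancel₀ (hdpos i).ne'
      rw [this, Matrix.diagonal_one]
    have hM : ∀ i j : Fin n, (Matrix.diagonal d * bioJac n α k x *
        (Matrix.diagonal d)⁻¹) i j = d i * bioJac n α k x i j * (d j)⁻¹ := by
      intro i j
      rw [hdinv]
      simp [Matrix.mul_diagonal, Matrix.diagonal_mul]
    haveI : Nonempty (Fin n) := ⟨⟨0, h0n⟩⟩
    apply ciSup_le
    intro j
    have hdiag : (Matrix.diagonal d * bioJac n α k x * (Matrix.diagonal d)⁻¹) j j = -α j := by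
      rw [hM]
      have : bioJac n α k x j j = -α j := by simp [bioJac]
      rw [this]
      rw [mul_comm (d j) (-α j), mul_assoc, mul_inv_cancel₀ (hdpos j).ne', mul_one]
    by_cases hj : (j : ℕ) = n - 1
    · -- last column
      have hjl : j = lst := Fin.ext hj
      set i₀ : Fin n := ⟨0, h0n⟩ with hi₀
      have hne : i₀ ≠ j := by
        simp only [hi₀, hjl, hlst, ne_eq, Fin.ext_iff]
        omega
      have hval : bioJac n α k x i₀ j = (k - 1) / (k + x j) ^ 2 := by
        unfold bioJac
        rw [if_neg hne, if_neg (by show ¬((0:ℕ) = (j:ℕ) + 1); omega), if_pos ⟨rfl, hj⟩]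
      have hxj : 0 ≤ x j := hx j
      have hkx : 0 < k + x j := by linarith
      have hsum : ∑ i ∈ Finset.univ.erase j,
          |(Matrix.diagonal d * bioJac n α k x * (Matrix.diagonal d)⁻¹) i j|
          = (k - 1) / (k + x j) ^ 2 * (d j)⁻¹ := by
        rw [Finset.sum_eq_single_of_mem i₀ (Finset.mem_erase.2 ⟨hne, Finset.mem_univ _⟩)]
        · have hdz : d i₀ = 1 := BioAux.d_zero α ε i₀ rfl
          rw [hM, hval, hdz, one_mul]
          exact abs_of_nonneg (mul_nonneg (div_nonneg (by linarith) (by positivity))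
            (inv_nonneg.2 (hdpos j).le))
        · intro b hb hbne
          have hbj : b ≠ j := Finset.ne_of_mem_erase hb
          have hb0 : (b : ℕ) ≠ 0 := by
            intro hb0
            exact hbne (Fin.ext hb0)
          have hbs : (b : ℕ) ≠ (j : ℕ) + 1 := by
            have := b.isLt
            omega
          have : bioJac n α k x b j = 0 := by
            unfold bioJac
            rw [if_neg hbj, if_neg hbs, if_neg (by tauto)]
          rw [hM, this]
          simp
      show cCol _ j ≤ -ε / 2
      unfold cCol
      rw [hdiag, hsum]
      have hkk : (k - 1) / (k + x j) ^ 2 ≤ (k - 1) / k ^ 2 := by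
        apply div_le_div_of_nonneg_left (by linarith) (by positivity)
        nlinarith
      have hdj : 0 < d j := hdpos j
      have hstep : (k - 1) / (k + x j) ^ 2 * (d j)⁻¹ ≤ α j - ε / 2 := by
        rw [← div_eq_mul_inv, div_le_iff₀ hdj]
        calc (k - 1) / (k + x j) ^ 2 ≤ (k - 1) / k ^ 2 := hkk
          _ ≤ (α lst - ε / 2) * d lst := hεΨ.le
          _ = (α j - ε / 2) * d j := by rw [hjl]
      linarith
    · -- other columns
      have hj1 : (j : ℕ) + 1 < n := by have := j.isLt; omega
      set i₀ : Fin n := ⟨(j : ℕ) + 1, hj1⟩ with hi₀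
      have hne : i₀ ≠ j := by
        simp only [hi₀, ne_eq, Fin.ext_iff]
        omega
      have hval : bioJac n α k x i₀ j = 1 := by
        unfold bioJac
        rw [if_neg hne, if_pos rfl]
      have hsum : ∑ i ∈ Finset.univ.erase j,
          |(Matrix.diagonal d * bioJac n α k x * (Matrix.diagonal d)⁻¹) i j|
          = α j - ε := by
        rw [Finset.sum_eq_single_of_mem i₀ (Finset.mem_erase.2 ⟨hne, Finset.mem_univ _⟩)]
        · rw [hM, hval, mul_one]
          have hds : d i₀ = d j * (α j - ε) := BioAux.d_succ α ε j hj1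
          rw [hds]
          rw [mul_comm (d j) (α j - ε), mul_assoc, mul_inv_cancel₀ (hdpos j).ne', mul_one]
          exact abs_of_pos (sub_pos.2 (hεα j))
        · intro b hb hbne
          have hbj : b ≠ j := Finset.ne_of_mem_erase hb
          have hbs : (b : ℕ) ≠ (j : ℕ) + 1 := by
            intro hbs
            exact hbne (Fin.ext hbs)
          have : bioJac n α k x b j = 0 := by
            unfold bioJac
            rw [if_neg hbj, if_neg hbs, if_neg (by tauto)]
          rw [hM, this]
          simp
      show cCol _ j ≤ -ε / 2
      unfold cCol
      rw [hdiag, hsum]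
      linarith
  · -- contraction
    refine ⟨ε / 2, by linarith, ?_⟩
    intro t₁ t₂ ht₁0 ht12 u v hu hv
    set L : ℝ := (k - 1) / k ^ 2 with hLdef
    have hL : 0 ≤ L := div_nonneg (by linarith) (by positivity)
    set w : Fin n → ℝ → ℝ := fun i t => u t i - v t i with hw
    set m : ℝ → ℝ := fun t => ∑ i, d i * |w i t| with hm
    have hgoal : ∀ t, ∑ i, |dEps α ε i * (u t i - v t i)| = m t := by
      intro t
      apply Finset.sum_congr rfl
      intro i _
      rw [abs_mul, abs_of_pos (hdpos i)]
    rw [hgoal t₂, hgoal t₁]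
    have hfne : (Finset.univ : Finset (Fin n)).Nonempty := ⟨⟨0, h0n⟩, Finset.mem_univ _⟩
    set β : ℝ := Finset.univ.sup' hfne α with hβ
    have hβpos : 0 < β := lt_of_lt_of_le (hα ⟨0, h0n⟩) (Finset.le_sup' α (Finset.mem_univ _))
    have hwc : ∀ i, ContinuousOn (fun t => w i t) (Set.Icc t₁ t₂) := by
      intro i t ht
      have h1 : ContinuousWithinAt u (Set.Ici t₁) t := ((hu t ht.1).2).continuousWithinAt
      have h2 : ContinuousWithinAt v (Set.Ici t₁) t := ((hv t ht.1).2).continuousWithinAt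
      have h1' : ContinuousWithinAt (fun z => u z i) (Set.Ici t₁) t :=
        (continuous_apply i).continuousAt.comp_continuousWithinAt h1
      have h2' : ContinuousWithinAt (fun z => v z i) (Set.Ici t₁) t :=
        (continuous_apply i).continuousAt.comp_continuousWithinAt h2
      exact (h1'.sub h2').mono Set.Icc_subset_Ici_self
    have hcont : ContinuousOn m (Set.Icc t₁ t₂) := by
      intro t ht
      exact tendsto_finset_sum _ fun i _ => ((hwc i t ht).abs).const_mul (d i)
    -- helper computations of bioF
    set z0 : Fin n := ⟨0, h0n⟩ with hz0
    have hbioF0 : ∀ p : Fin n → ℝ,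
        bioF n α k p z0 = (1 + p lst) / (k + p lst) - α z0 * p z0 := by
      intro p
      unfold bioF
      rw [if_pos (show ((z0 : Fin n) : ℕ) = 0 from rfl)]
    have hbioFi : ∀ (p : Fin n → ℝ) (i : Fin n), 0 < (i : ℕ) →
        bioF n α k p i
          = p ⟨(i : ℕ) - 1, lt_of_le_of_lt (Nat.sub_le _ _) i.isLt⟩ - α i * p i := by
      intro p i hipos
      unfold bioF
      rw [if_neg (by omega)]
    -- liminf slope condition
    have hf' : ∀ s ∈ Set.Ico t₁ t₂, ∀ r : ℝ, -(ε / 2) * m s < r →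
        ∃ᶠ z in 𝓝[>] s, (z - s)⁻¹ * (m z - m s) < r := by
      intro s hs r hr
      have hst : t₁ ≤ s := hs.1
      have hud := (hu s hst).2
      have hvd := (hv s hst).2
      set y : Fin n → ℝ := fun i => bioF n α k (u s) i - bioF n α k (v s) i with hy
      have hwd : ∀ i, HasDerivWithinAt (fun t => w i t) (y i) (Set.Ici t₁) s := by
        intro i
        have h1 : HasDerivWithinAt (fun t => u t i) (bioF n α k (u s) i) (Set.Ici t₁) s :=
          (ContinuousLinearMap.proj (R := ℝ) (φ := fun _ : Fin n => ℝ)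
            i).hasFDerivAt.comp_hasDerivWithinAt s hud
        have h2 : HasDerivWithinAt (fun t => v t i) (bioF n α k (v s) i) (Set.Ici t₁) s :=
          (ContinuousLinearMap.proj (R := ℝ) (φ := fun _ : Fin n => ℝ)
            i).hasFDerivAt.comp_hasDerivWithinAt s hvd
        exact h1.sub h2
      have hslope : ∀ i, Filter.Tendsto (fun z => (z - s)⁻¹ * (w i z - w i s))
          (𝓝[>] s) (𝓝 (y i)) := by
        intro i
        have h1 := hasDerivWithinAt_iff_tendsto_slope.1 (hwd i)
        have hsub : Set.Ioi s ⊆ Set.Ici t₁ \ {s} := fun z hz =>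
          ⟨hst.trans (le_of_lt hz), ne_of_gt hz⟩
        have h2 := h1.mono_left (nhdsWithin_mono s hsub)
        have heq : (fun z => (z - s)⁻¹ * (w i z - w i s)) = slope (fun t => w i t) s := by
          funext z
          rw [slope_def_field]
          ring
        rw [heq]
        exact h2
      have hE : Filter.Tendsto (fun z => ∑ i, d i * |((z - s)⁻¹ * (w i z - w i s)) - y i|)
          (𝓝[>] s) (𝓝 0) := by
        have h := tendsto_finset_sum (Finset.univ : Finset (Fin n))
          (fun i _ => (((hslope i).sub_const (y i)).abs.const_mul (d i)))
        simpa using h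
      have hy0 : |y z0 + α z0 * w z0 s| ≤ L * |w lst s| := by
        have heq : y z0 + α z0 * w z0 s
            = (1 + u s lst) / (k + u s lst) - (1 + v s lst) / (k + v s lst) := by
          show (bioF n α k (u s) z0 - bioF n α k (v s) z0) + α z0 * (u s z0 - v s z0) = _
          rw [hbioF0 (u s), hbioF0 (v s)]
          ring
        rw [heq]
        exact BioAux.gLip k hk (u s lst) (v s lst) ((hu s hst).1 lst) ((hv s hst).1 lst)
      have hyi : ∀ i : Fin n, 0 < (i : ℕ) →
          y i = w ⟨(i : ℕ) - 1, lt_of_le_of_lt (Nat.sub_le _ _) i.isLt⟩ s - α i * w i s := by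
        intro i hipos
        show bioF n α k (u s) i - bioF n α k (v s) i = _
        rw [hbioFi (u s) i hipos, hbioFi (v s) i hipos]
        show (u s _ - α i * u s i) - (v s _ - α i * v s i)
          = (u s _ - v s _) - α i * (u s i - v s i)
        ring
      have hδ : 0 < r + ε / 2 * m s := by linarith
      have hEsmall : ∀ᶠ z in 𝓝[>] s,
          (∑ i, d i * |((z - s)⁻¹ * (w i z - w i s)) - y i|) < r + ε / 2 * m s :=
        hE.eventually_lt_const hδ
      have hIoo : Set.Ioo s (s + β⁻¹) ∈ 𝓝[>] s :=
        Ioo_mem_nhdsGT_of_mem ⟨le_rfl, lt_add_of_pos_right s (inv_pos.2 hβpos)⟩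
      apply Filter.Eventually.frequently
      filter_upwards [hEsmall, hIoo] with z hEz hzm
      have hzpos : 0 < z - s := sub_pos.2 hzm.1
      have hhα : ∀ i, (z - s) * α i ≤ 1 := by
        intro i
        have ha1 : α i ≤ β := Finset.le_sup' α (Finset.mem_univ i)
        have ha2 : z - s ≤ β⁻¹ := by
          have := hzm.2
          linarith
        calc (z - s) * α i ≤ β⁻¹ * β :=
              mul_le_mul ha2 ha1 (hα i).le (inv_nonneg.2 hβpos.le)
          _ = 1 := inv_mul_cancel₀ hβpos.ne'
      have hcore := BioAux.core hn α ε L hεpos hεα hL hεΨ.le (fun i => w i s) y hy0 hyi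
        (z - s) hzpos hhα
      have h1 : m z ≤ (∑ i, d i * |w i s + (z - s) * y i|)
          + (z - s) * ∑ i, d i * |((z - s)⁻¹ * (w i z - w i s)) - y i| := by
        rw [Finset.mul_sum, ← Finset.sum_add_distrib]
        apply Finset.sum_le_sum
        intro i _
        have hdec : w i z = (w i s + (z - s) * y i)
            + (z - s) * (((z - s)⁻¹ * (w i z - w i s)) - y i) := by
          field_simp
          ring
        have habs : |w i z| ≤ |w i s + (z - s) * y i|
            + (z - s) * |((z - s)⁻¹ * (w i z - w i s)) - y i| := by
          calc |w i z| = |(w i s + (z - s) * y i)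
              + (z - s) * (((z - s)⁻¹ * (w i z - w i s)) - y i)| := by rw [← hdec]
            _ ≤ |w i s + (z - s) * y i|
                + |(z - s) * (((z - s)⁻¹ * (w i z - w i s)) - y i)| := abs_add_le _ _
            _ = |w i s + (z - s) * y i|
                + (z - s) * |((z - s)⁻¹ * (w i z - w i s)) - y i| := by
                rw [abs_mul, abs_of_pos hzpos]
        calc d i * |w i z| ≤ d i * (|w i s + (z - s) * y i|
            + (z - s) * |((z - s)⁻¹ * (w i z - w i s)) - y i|) :=
              mul_le_mul_of_nonneg_left habs (hdpos i).le
          _ = d i * |w i s + (z - s) * y i|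
              + (z - s) * (d i * |((z - s)⁻¹ * (w i z - w i s)) - y i|) := by ring
      have hfinal : m z - m s < (z - s) * r := by
        have h3 := mul_lt_mul_of_pos_left hEz hzpos
        have h4 : (∑ i, d i * |w i s + (z - s) * y i|) ≤ (1 - (z - s) * (ε / 2)) * m s :=
          hcore
        nlinarith
      calc (z - s)⁻¹ * (m z - m s) < (z - s)⁻¹ * ((z - s) * r) :=
            mul_lt_mul_of_pos_left hfinal (inv_pos.2 hzpos)
        _ = r := by
            field_simp
    have key := le_gronwallBound_of_liminf_deriv_right_le (f := m)
      (f' := fun t => -(ε / 2) * m t) (δ := m t₁) (K := -(ε / 2)) (ε := 0)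
      hcont hf' le_rfl (fun s _ => by simp) t₂ (Set.right_mem_Icc.2 ht12)
    rw [gronwallBound_ε0] at key
    calc m t₂ ≤ m t₁ * Real.exp (-(ε / 2) * (t₂ - t₁)) := key
      _ = Real.exp (-(ε / 2) * (t₂ - t₁)) * m t₁ := mul_comm _ _
end

section
/- Consider the scalar system ẋ = f(x) on Ω = [−1, 1], where f(x) = −2x for |x| < 1/2 and f(x) = −x/|x| for 1/2 ≤ |x| ≤ 1, with solution map x(t, t₁, a) (the solution at time t ≥ t₁ with x(t₁) = a ∈ [−1, 1]). Then: (i) the system is not weakly contractive: there exist a, b ∈ [−1, 1] with a ≠ b and times s₂ > s₁ ≥ 0 such that |x(s₂, s₁, a) − x(s₂, s₁, b)| = |a − b|; yet (ii) the system is SO (contractive after a small overshoot) with respect to the absolute value, with ℓ(ε) = min{ln(1+ε), 1}: for every ε > 0, all t₂ ≥ t₁ ≥ 0, and all a, b ∈ [−1, 1], |x(t₂, t₁, a) − x(t₂, t₁, b)| ≤ (1+ε)·exp(−min{ln(1+ε), 1}·(t₂−t₁))·|a − b|. -/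
open Filter Topology Set

/-- The vector field `f(x) = −2x` for `|x| < 1/2` and `f(x) = −x/|x|` for
`1/2 ≤ |x| ≤ 1`. -/
noncomputable def f17 (y : ℝ) : ℝ :=
  if |y| < 1 / 2 then -2 * y else -y / |y|

lemma f17_eq_clamp (y : ℝ) : f17 y = max (-1) (min 1 (-2*y)) := by
  unfold f17
  rcases lt_trichotomy y 0 with hy | rfl | hy
  · rw [abs_of_neg hy]
    split_ifs with h
    · rw [min_eq_right (by linarith), max_eq_right (by linarith)]
    · rw [neg_div_neg_eq, div_self (ne_of_lt hy),
        min_eq_left (by linarith), max_eq_right (by norm_num)]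
  · norm_num
  · rw [abs_of_pos hy]
    split_ifs with h
    · rw [min_eq_right (by linarith), max_eq_right (by linarith)]
    · rw [neg_div, div_self (ne_of_gt hy), min_eq_right (by linarith),
        max_eq_left (by linarith)]

lemma f17_antitone : Antitone f17 := by
  intro u v huv
  rw [f17_eq_clamp, f17_eq_clamp]
  exact max_le_max le_rfl (min_le_min le_rfl (by linarith))

lemma f17_neg (y : ℝ) : f17 (-y) = - f17 y := by
  unfold f17
  rw [abs_neg]
  split_ifs with h
  · ring
  · rw [neg_neg, neg_div, neg_neg]

lemma f17_of_half_le {y : ℝ} (h : 1/2 ≤ y) : f17 y = -1 := by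
  rw [f17_eq_clamp, min_eq_right (by linarith), max_eq_left (by linarith)]

lemma f17_of_abs_le {y : ℝ} (h : |y| ≤ 1/2) : f17 y = -2*y := by
  rw [abs_le] at h
  rw [f17_eq_clamp, min_eq_right (by linarith), max_eq_right (by linarith)]

lemma f17_mul_nonpos (u v : ℝ) : (f17 u - f17 v) * (u - v) ≤ 0 := by
  rcases le_total u v with h | h
  · have := f17_antitone h
    nlinarith
  · have := f17_antitone h
    nlinarith

section
variable {x : ℝ → ℝ → ℝ → ℝ}
variable (hode : ∀ t₁ ≥ (0:ℝ), ∀ a ∈ Set.Icc (-1:ℝ) 1, ∀ t ≥ t₁,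
      HasDerivWithinAt (fun s => x s t₁ a) (f17 (x t t₁ a)) (Set.Ici t₁) t)
variable {t₁ : ℝ} {a : ℝ}

include hode

lemma contOn (ht₁ : 0 ≤ t₁) (ha : a ∈ Icc (-1:ℝ) 1) :
    ContinuousOn (fun s => x s t₁ a) (Ici t₁) :=
  fun t ht => (hode t₁ ht₁ a ha t ht).continuousWithinAt

lemma line_seg (ht₁ : 0 ≤ t₁) (ha : a ∈ Icc (-1:ℝ) 1) {σ τ : ℝ} (hσ : t₁ ≤ σ) (hστ : σ ≤ τ)
    (hg : ∀ s ∈ Ico σ τ, 1/2 ≤ x s t₁ a) : x τ t₁ a = x σ t₁ a - (τ - σ) := by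
  have key := constant_of_has_deriv_right_zero (f := fun s => x s t₁ a + s) (a := σ) (b := τ)
    (((contOn hode ht₁ ha).mono (Icc_subset_Ici_self.trans (Ici_subset_Ici.2 hσ))).add
      continuousOn_id)
    (fun s hs => by
      have hd := ((hode t₁ ht₁ a ha s (hσ.trans hs.1)).mono
        (Ici_subset_Ici.2 (hσ.trans hs.1))).add (hasDerivWithinAt_id s (Ici s))
      rw [f17_of_half_le (hg s hs)] at hd
      have hd' : HasDerivWithinAt ((fun s => x s t₁ a) + id) 0 (Ici s) s := by simpa using hd
      exact hd')
    τ (right_mem_Icc.2 hστ)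
  change x τ t₁ a + τ = x σ t₁ a + σ at key
  linarith

lemma le_half (ht₁ : 0 ≤ t₁) (ha : a ∈ Icc (-1:ℝ) 1)
    (hinit : x t₁ t₁ a = a) {t : ℝ} (ht : t₁ + 1/2 ≤ t) : x t t₁ a ≤ 1/2 := by
  by_contra hgt
  push_neg at hgt
  have htt : t₁ ≤ t := by linarith
  set g := fun s => x s t₁ a with hgdef
  set A := {s ∈ Icc t₁ t | g s ≤ 1/2} with hAdef
  by_cases hA : A.Nonempty
  · have hAc : IsClosed A :=
      ((contOn hode ht₁ ha).mono (Icc_subset_Ici_self)).preimage_isClosed_of_isClosed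
        isClosed_Icc isClosed_Iic
    have hbdd : BddAbove A := (bddAbove_Icc).mono (sep_subset _ _)
    have hmA : sSup A ∈ A := hAc.csSup_mem hA hbdd
    set m := sSup A with hmdef
    have hmle : g m ≤ 1/2 := hmA.2
    have hmt : m < t := hmA.1.2.lt_of_ne fun h => absurd (h ▸ hmA.2) (not_le.2 hgt)
    have hgt' : ∀ s ∈ Ioc m t, 1/2 < g s := by
      intro s hs
      by_contra hle
      push_neg at hle
      exact absurd (le_csSup hbdd ⟨⟨hmA.1.1.trans hs.1.le, hs.2⟩, hle⟩) (not_le.2 hs.1)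
    have hge : 1/2 ≤ g m := by
      have hc : ContinuousWithinAt g (Ioc m t) m :=
        ((contOn hode ht₁ ha) m hmA.1.1).mono (Ioc_subset_Icc_self.trans
          (Icc_subset_Ici_self.trans (Ici_subset_Ici.2 hmA.1.1)))
      have hne : (𝓝[Ioc m t] m).NeBot := by
        rw [← mem_closure_iff_nhdsWithin_neBot, closure_Ioc hmt.ne]
        exact left_mem_Icc.2 hmt.le
      exact ge_of_tendsto hc (eventually_nhdsWithin_of_forall fun s hs => (hgt' s hs).le)
    have line : g t = g m - (t - m) := by
      refine line_seg hode ht₁ ha hmA.1.1 hmt.le fun s hs => ?_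
      rcases eq_or_lt_of_le hs.1 with rfl | hlt
      · exact hge
      · exact (hgt' s ⟨hlt, hs.2.le⟩).le
    linarith
  · rw [not_nonempty_iff_eq_empty] at hA
    have hall : ∀ s ∈ Ico t₁ t, 1/2 ≤ g s := by
      intro s hs
      by_contra hle
      push_neg at hle
      have hsA : s ∈ A := ⟨⟨hs.1, hs.2.le⟩, hle.le⟩
      rw [hA] at hsA
      exact hsA
    have line : g t = g t₁ - (t - t₁) := line_seg hode ht₁ ha le_rfl htt hall
    have : g t₁ = a := hinit
    have : a ≤ 1 := ha.2
    simp only [hgdef] at *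
    linarith

end

section
variable {x : ℝ → ℝ → ℝ → ℝ}
variable (hode : ∀ t₁ ≥ (0:ℝ), ∀ a ∈ Set.Icc (-1:ℝ) 1, ∀ t ≥ t₁,
      HasDerivWithinAt (fun s => x s t₁ a) (f17 (x t t₁ a)) (Set.Ici t₁) t)
variable {t₁ : ℝ} {a b : ℝ}

include hode

lemma dist_mono (ht₁ : 0 ≤ t₁) (ha : a ∈ Icc (-1:ℝ) 1) (hb : b ∈ Icc (-1:ℝ) 1)
    {s t : ℝ} (hs : t₁ ≤ s) (hst : s ≤ t) :
    |x t t₁ a - x t t₁ b| ≤ |x s t₁ a - x s t₁ b| := by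
  set q := fun u => (x u t₁ a - x u t₁ b)^2 with hqdef
  have hder : ∀ u ∈ Ioi t₁, HasDerivAt q
      (2 * (x u t₁ a - x u t₁ b)^1 * (f17 (x u t₁ a) - f17 (x u t₁ b))) u := by
    intro u hu
    have hda : HasDerivAt (fun s => x s t₁ a) (f17 (x u t₁ a)) u :=
      (hode t₁ ht₁ a ha u (le_of_lt hu)).hasDerivAt (Ici_mem_nhds hu)
    have hdb : HasDerivAt (fun s => x s t₁ b) (f17 (x u t₁ b)) u :=
      (hode t₁ ht₁ b hb u (le_of_lt hu)).hasDerivAt (Ici_mem_nhds hu)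
    have := (hda.sub hdb).pow 2
    norm_num at this
    rw [pow_one]
    exact this
  have hq : AntitoneOn q (Ici t₁) := by
    apply antitoneOn_of_deriv_nonpos (convex_Ici t₁)
    · exact ((contOn hode ht₁ ha).sub (contOn hode ht₁ hb)).pow 2
    · intro u hu
      rw [interior_Ici] at hu
      exact (hder u hu).differentiableAt.differentiableWithinAt
    · intro u hu
      rw [interior_Ici] at hu
      rw [(hder u hu).deriv]
      simp only [pow_one]
      nlinarith [f17_mul_nonpos (x u t₁ a) (x u t₁ b)]
  have hqq : q t ≤ q s := hq (mem_Ici.2 hs) (mem_Ici.2 (hs.trans hst)) hst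
  rw [← Real.sqrt_sq_eq_abs, ← Real.sqrt_sq_eq_abs]
  exact Real.sqrt_le_sqrt hqq

lemma exp_contract (ht₁ : 0 ≤ t₁) (ha : a ∈ Icc (-1:ℝ) 1) (hb : b ∈ Icc (-1:ℝ) 1)
    {σ t : ℝ} (hσ : t₁ ≤ σ) (hσt : σ ≤ t)
    (hbd : ∀ s ∈ Icc σ t, |x s t₁ a| ≤ 1/2 ∧ |x s t₁ b| ≤ 1/2) :
    |x t t₁ a - x t t₁ b| = Real.exp (-2*(t-σ)) * |x σ t₁ a - x σ t₁ b| := by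
  set w := fun s => Real.exp (2*s) * (x s t₁ a - x s t₁ b) with hwdef
  have key : w t = w σ := by
    refine constant_of_has_deriv_right_zero ?_ ?_ t (right_mem_Icc.2 hσt)
    · refine ContinuousOn.mul ?_ ?_
      · exact (Real.continuous_exp.comp (continuous_const.mul continuous_id)).continuousOn
      · exact ((contOn hode ht₁ ha).sub (contOn hode ht₁ hb)).mono
          (Icc_subset_Ici_self.trans (Ici_subset_Ici.2 hσ))
    · intro s hs
      have hst₁ : t₁ ≤ s := hσ.trans hs.1
      have hda := (hode t₁ ht₁ a ha s hst₁).mono (Ici_subset_Ici.2 hst₁)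
      have hdb := (hode t₁ ht₁ b hb s hst₁).mono (Ici_subset_Ici.2 hst₁)
      have he : HasDerivAt (fun u => Real.exp (2*u)) (Real.exp (2*s) * 2) s := by
        simpa using ((hasDerivAt_id s).const_mul 2).exp
      have hw := he.hasDerivWithinAt.mul (hda.sub hdb)
      have hsmem : s ∈ Icc σ t := ⟨hs.1, hs.2.le⟩
      rw [f17_of_abs_le (hbd s hsmem).1, f17_of_abs_le (hbd s hsmem).2] at hw
      convert hw using 1
      · rfl
      · funext u
        simp only [hwdef, Pi.mul_apply, Pi.sub_apply]
      · simp only [Pi.sub_apply]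
        ring
  have hv : x t t₁ a - x t t₁ b = Real.exp (-2*(t-σ)) * (x σ t₁ a - x σ t₁ b) := by
    have h1 : Real.exp (2*t) * (x t t₁ a - x t t₁ b)
        = Real.exp (2*σ) * (x σ t₁ a - x σ t₁ b) := key
    have h2 : Real.exp (-2*(t-σ)) * Real.exp (2*t) = Real.exp (2*σ) := by
      rw [← Real.exp_add]; ring_nf
    have h3 : Real.exp (2*σ) * (x t t₁ a - x t t₁ b)
        = Real.exp (2*σ) * (Real.exp (-2*(t-σ)) * (x σ t₁ a - x σ t₁ b)) := by
      calc Real.exp (2*σ) * (x t t₁ a - x t t₁ b)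
          = Real.exp (-2*(t-σ)) * (Real.exp (2*t) * (x t t₁ a - x t t₁ b)) := by
            rw [← mul_assoc, h2]
        _ = Real.exp (-2*(t-σ)) * (Real.exp (2*σ) * (x σ t₁ a - x σ t₁ b)) := by rw [h1]
        _ = Real.exp (2*σ) * (Real.exp (-2*(t-σ)) * (x σ t₁ a - x σ t₁ b)) := by ring
    exact mul_left_cancel₀ (Real.exp_pos _).ne' h3
  rw [hv, abs_mul, abs_of_pos (Real.exp_pos _)]

lemma stay (ha : a ∈ Icc (1/2:ℝ) 1) (hinit : x 0 0 a = a) {t : ℝ}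
    (ht : t ∈ Icc 0 (a - 1/2)) : x t 0 a = a - t := by
  have ha' : a ∈ Icc (-1:ℝ) 1 := ⟨by linarith [ha.1], ha.2⟩
  have hclaim : ∀ s ∈ Icc 0 (a - 1/2), 1/2 ≤ x s 0 a := by
    intro s hs
    by_contra hlt
    push_neg at hlt
    set B := {u ∈ Icc (0:ℝ) s | x u 0 a ≤ 1/2} with hBdef
    have hBne : B.Nonempty := ⟨s, ⟨right_mem_Icc.2 hs.1, hlt.le⟩⟩
    have hBc : IsClosed B :=
      ((contOn hode le_rfl ha').mono (Icc_subset_Ici_self)).preimage_isClosed_of_isClosed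
        isClosed_Icc isClosed_Iic
    have hbdd : BddBelow B := (bddBelow_Icc).mono (sep_subset _ _)
    have hmB : sInf B ∈ B := hBc.csInf_mem hBne hbdd
    set m := sInf B with hmdef
    have hgt' : ∀ u ∈ Ico (0:ℝ) m, 1/2 < x u 0 a := by
      intro u hu
      by_contra hle
      push_neg at hle
      exact absurd (csInf_le hbdd ⟨⟨hu.1, hu.2.le.trans hmB.1.2⟩, hle⟩) (not_le.2 hu.2)
    have hline : x m 0 a = x 0 0 a - (m - 0) :=
      line_seg hode le_rfl ha' le_rfl hmB.1.1 fun u hu => (hgt' u hu).le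
    rw [hinit] at hline
    -- x m 0 a ≤ 1/2, so a - m ≤ 1/2, m ≥ a - 1/2 ≥ s ≥ m
    have hm1 : a - 1/2 ≤ m := by linarith [hmB.2, hline]
    have hms : m ≤ s := hmB.1.2
    have : m = s := le_antisymm hms (hs.2.trans hm1)
    rw [this] at hline
    have : 1/2 ≤ a - s := by linarith [hs.2]
    linarith [hline, hlt]
  have := line_seg hode le_rfl ha' le_rfl ht.1 fun u hu =>
    hclaim u ⟨hu.1, hu.2.le.trans ht.2⟩
  rw [hinit] at this
  linarith [this]

end

/-- The scalar system `ẋ = f17(x)` on `Ω = [−1,1]` is not weakly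
contractive, yet it is SO (contractive after a small overshoot) w.r.t. the absolute
value, with `ℓ(ε) = min{ln(1+ε), 1}`. -/
theorem shift_system_not_wc_but_so
    (x : ℝ → ℝ → ℝ → ℝ)
    (hmem : ∀ t t₁ a, 0 ≤ t₁ → t₁ ≤ t → a ∈ Set.Icc (-1:ℝ) 1 →
      x t t₁ a ∈ Set.Icc (-1:ℝ) 1)
    (hinit : ∀ t₁ a, 0 ≤ t₁ → a ∈ Set.Icc (-1:ℝ) 1 → x t₁ t₁ a = a)
    (hode : ∀ t₁ ≥ (0:ℝ), ∀ a ∈ Set.Icc (-1:ℝ) 1, ∀ t ≥ t₁,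
      HasDerivWithinAt (fun s => x s t₁ a) (f17 (x t t₁ a)) (Set.Ici t₁) t) :
    -- (i) not weakly contractive
    ((∃ a ∈ Set.Icc (-1:ℝ) 1, ∃ b ∈ Set.Icc (-1:ℝ) 1, ∃ s₁ s₂ : ℝ,
        a ≠ b ∧ 0 ≤ s₁ ∧ s₁ < s₂ ∧ |x s₂ s₁ a - x s₂ s₁ b| = |a - b|) ∧
     -- (ii) SO with ℓ(ε) = min{ln(1+ε), 1}
     (∀ ε > (0:ℝ), ∀ t₁ t₂ : ℝ, 0 ≤ t₁ → t₁ ≤ t₂ →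
        ∀ a ∈ Set.Icc (-1:ℝ) 1, ∀ b ∈ Set.Icc (-1:ℝ) 1,
          |x t₂ t₁ a - x t₂ t₁ b| ≤
            (1 + ε) * Real.exp (-(min (Real.log (1 + ε)) 1) * (t₂ - t₁)) * |a - b|)) := by
  constructor
  · -- (i) not weakly contractive
    refine ⟨1, ⟨by norm_num, le_rfl⟩, 3/4, ⟨by norm_num, by norm_num⟩, 0, 1/4,
      by norm_num, le_rfl, by norm_num, ?_⟩
    have h1 : x (1/4) 0 1 = 1 - 1/4 :=
      stay hode ⟨by norm_num, le_rfl⟩ (hinit 0 1 le_rfl ⟨by norm_num, le_rfl⟩)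
        ⟨by norm_num, by norm_num⟩
    have h2 : x (1/4) 0 (3/4) = 3/4 - 1/4 :=
      stay hode ⟨by norm_num, by norm_num⟩ (hinit 0 (3/4) le_rfl ⟨by norm_num, by norm_num⟩)
        ⟨by norm_num, by norm_num⟩
    rw [h1, h2]
    norm_num
  · -- (ii) SO
    intro ε hε t₁ t₂ ht₁ ht₁₂ a ha b hb
    set ℓ := min (Real.log (1+ε)) 1 with hldef
    have hε1 : (0:ℝ) < 1 + ε := by linarith
    have hlog : 0 ≤ Real.log (1+ε) := Real.log_nonneg (by linarith)
    have hl0 : 0 ≤ ℓ := le_min hlog (by norm_num)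
    have hl1 : ℓ ≤ 1 := min_le_right _ _
    have hllog : ℓ ≤ Real.log (1+ε) := min_le_left _ _
    have hΔ0 : 0 ≤ t₂ - t₁ := by linarith
    have habs : |x t₂ t₁ a - x t₂ t₁ b| ≤ |a - b| := by
      have := dist_mono hode ht₁ ha hb le_rfl ht₁₂
      rwa [hinit t₁ a ht₁ ha, hinit t₁ b ht₁ hb] at this
    rcases le_or_gt (t₂ - t₁) 1 with hΔle | hΔgt
    · -- short time: overshoot factor absorbs everything
      have h1 : ℓ * (t₂ - t₁) ≤ Real.log (1+ε) := by nlinarith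
      have h2 : Real.exp (-Real.log (1+ε)) ≤ Real.exp (-ℓ * (t₂-t₁)) :=
        Real.exp_le_exp.2 (by linarith)
      rw [Real.exp_neg, Real.exp_log hε1] at h2
      have h3 := mul_le_mul_of_nonneg_left h2 hε1.le
      rw [mul_inv_cancel₀ hε1.ne'] at h3
      calc |x t₂ t₁ a - x t₂ t₁ b| ≤ |a - b| := habs
        _ = 1 * |a - b| := (one_mul _).symm
        _ ≤ (1 + ε) * Real.exp (-ℓ * (t₂ - t₁)) * |a - b| :=
            mul_le_mul_of_nonneg_right h3 (abs_nonneg _)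
    · -- long time: both solutions are in [-1/2,1/2] after t₁ + 1/2
      have hlow : ∀ c ∈ Set.Icc (-1:ℝ) 1, ∀ s, t₁ + 1/2 ≤ s → -(1/2) ≤ x s t₁ c := by
        intro c hc s hs
        have hodey : ∀ u₁ ≥ (0:ℝ), ∀ d ∈ Set.Icc (-1:ℝ) 1, ∀ u ≥ u₁,
            HasDerivWithinAt (fun s => -x s u₁ (-d)) (f17 (-x u u₁ (-d))) (Set.Ici u₁) u := by
          intro u₁ hu₁ d hd u hu
          have hnd : -d ∈ Set.Icc (-1:ℝ) 1 := ⟨by linarith [hd.2], by linarith [hd.1]⟩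
          have := (hode u₁ hu₁ (-d) hnd u hu).neg
          rwa [f17_neg]
        have hnc : -c ∈ Set.Icc (-1:ℝ) 1 := ⟨by linarith [hc.2], by linarith [hc.1]⟩
        have hinity : -x t₁ t₁ (-(-c)) = -c := by
          rw [neg_neg, hinit t₁ c ht₁ hc]
        have h := le_half (x := fun t u d => -x t u (-d)) hodey ht₁ hnc hinity hs
        simp only [neg_neg] at h
        linarith
    -- upper and lower bounds give the core membership
      have hbd : ∀ s ∈ Set.Icc (t₁ + 1/2) t₂, |x s t₁ a| ≤ 1/2 ∧ |x s t₁ b| ≤ 1/2 := by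
        intro s hs
        constructor <;> rw [abs_le]
        · exact ⟨hlow a ha s hs.1, le_half hode ht₁ ha (hinit t₁ a ht₁ ha) hs.1⟩
        · exact ⟨hlow b hb s hs.1, le_half hode ht₁ hb (hinit t₁ b ht₁ hb) hs.1⟩
      have heq := exp_contract hode ht₁ ha hb (σ := t₁ + 1/2)
        (by linarith) (by linarith) hbd
      have hσd : |x (t₁ + 1/2) t₁ a - x (t₁ + 1/2) t₁ b| ≤ |a - b| := by
        have := dist_mono hode ht₁ ha hb le_rfl (by linarith : t₁ ≤ t₁ + 1/2)
        rwa [hinit t₁ a ht₁ ha, hinit t₁ b ht₁ hb] at this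
      have hexp : Real.exp (-2*(t₂ - (t₁ + 1/2))) ≤ Real.exp (-ℓ * (t₂ - t₁)) := by
        apply Real.exp_le_exp.2
        nlinarith
      calc |x t₂ t₁ a - x t₂ t₁ b|
          = Real.exp (-2*(t₂ - (t₁ + 1/2))) * |x (t₁ + 1/2) t₁ a - x (t₁ + 1/2) t₁ b| := heq
        _ ≤ Real.exp (-2*(t₂ - (t₁ + 1/2))) * |a - b| :=
            mul_le_mul_of_nonneg_left hσd (Real.exp_pos _).le
        _ ≤ Real.exp (-ℓ * (t₂ - t₁)) * |a - b| :=
            mul_le_mul_of_nonneg_right hexp (abs_nonneg _)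
        _ ≤ (1 + ε) * Real.exp (-ℓ * (t₂ - t₁)) * |a - b| := by
            nlinarith [mul_nonneg (Real.exp_pos (-ℓ * (t₂ - t₁))).le (abs_nonneg (a - b)), hε]
end
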